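/- Let d ≥ 1 be an integer and C ≥ 0. Let s : ℤ → ℝ and, for each n ∈ ℕ, s_n : ℤ → ℝ all satisfy |s(j)| ≤ C, |s_n(j)| ≤ C for every j ∈ ℤ and the zero d-window condition. If sup_{j∈ℤ} |s_n(j) − s(j)| → 0 as n → ∞, then sup_{k∈ℤ, m∈ℕ} max( ρ(s_n;k,m)/ρ(s;k,m), ρ(s;k,m)/ρ(s_n;k,m) ) → 1 as n → ∞. -/

import Mathlib

open Filter

/-- `s : ℤ → ℝ` satisfies the zero `d`-window condition if every `d` consecutive
values sum to zero: `∑_{j=m}^{m+d-1} s j = 0` for all `m : ℤ`. -/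
def ZeroWindow (d : ℕ) (s : ℤ → ℝ) : Prop :=
  ∀ m : ℤ, ∑ j ∈ Finset.range d, s (m + j) = 0

/-- Forward partial sum `S_s(k,l) = ∑_{i=1}^{l} s (k+i)`, with `S_s(k,0) = 0`. -/
def Sfwd (s : ℤ → ℝ) (k : ℤ) (l : ℕ) : ℝ :=
  ∑ i ∈ Finset.range l, s (k + (i + 1))

/-- Backward partial sum `S_s⁻(k,l) = ∑_{i=1}^{l} s (k−i)`, with `S_s⁻(k,0) = 0`. -/
def Sbwd (s : ℤ → ℝ) (k : ℤ) (l : ℕ) : ℝ :=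
  ∑ i ∈ Finset.range l, s (k - (i + 1))

/-- Šarić's quasisymmetry quantity
`ρ(s;k,m) = e^{s k} · (∑_{l=0}^{m} e^{S_s(k,l)}) / (∑_{l=0}^{m} e^{−S_s⁻(k,l)})`. -/
noncomputable def rho (s : ℤ → ℝ) (k : ℤ) (m : ℕ) : ℝ :=
  Real.exp (s k) * (∑ l ∈ Finset.range (m + 1), Real.exp (Sfwd s k l)) /
    (∑ l ∈ Finset.range (m + 1), Real.exp (-(Sbwd s k l)))

lemma window_abs_sum_le {d : ℕ} (hd : 1 ≤ d) {t : ℤ → ℝ} {ε : ℝ} (hε : 0 ≤ ε)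
    (hw : ZeroWindow d t) (hb : ∀ j, |t j| ≤ ε) :
    ∀ l : ℕ, ∀ a : ℤ, |∑ i ∈ Finset.range l, t (a + i)| ≤ d * ε := by
  intro l
  induction l using Nat.strong_induction_on with
  | _ l ih =>
    intro a
    by_cases h : l < d
    · calc |∑ i ∈ Finset.range l, t (a + i)| ≤ ∑ i ∈ Finset.range l, |t (a + i)| :=
            Finset.abs_sum_le_sum_abs _ _
        _ ≤ ∑ _i ∈ Finset.range l, ε := Finset.sum_le_sum fun i _ => hb _
        _ = l * ε := by simp [nsmul_eq_mul]
        _ ≤ d * ε := mul_le_mul_of_nonneg_right (by exact_mod_cast h.le) hε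
    · push_neg at h
      have hl : l = d + (l - d) := by omega
      rw [hl, Finset.sum_range_add]
      have h1 : ∑ i ∈ Finset.range d, t (a + i) = 0 := hw a
      have h2 : ∑ i ∈ Finset.range (l - d), t (a + ↑(d + i)) =
          ∑ i ∈ Finset.range (l - d), t ((a + d) + i) := by
        apply Finset.sum_congr rfl
        intro i _
        congr 1
        push_cast
        ring
      rw [h1, h2, zero_add]
      exact ih (l - d) (by omega) (a + d)

/-- Forward partial-sum difference bound. -/
lemma abs_Sfwd_sub_le {d : ℕ} (hd : 1 ≤ d) {u v : ℤ → ℝ} {ε : ℝ} (hε : 0 ≤ ε)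
    (hwu : ZeroWindow d u) (hwv : ZeroWindow d v)
    (hb : ∀ j, |u j - v j| ≤ ε) (k : ℤ) (l : ℕ) :
    |Sfwd u k l - Sfwd v k l| ≤ d * ε := by
  have hw : ZeroWindow d (fun j => u j - v j) := by
    intro m
    simp only [Finset.sum_sub_distrib, hwu m, hwv m, sub_zero]
  have key := window_abs_sum_le hd hε hw hb l (k + 1)
  have : Sfwd u k l - Sfwd v k l = ∑ i ∈ Finset.range l, (u ((k + 1) + i) - v ((k + 1) + i)) := by
    simp only [Sfwd, ← Finset.sum_sub_distrib]
    apply Finset.sum_congr rfl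
    intro i _
    congr 2 <;> ring
  rw [this]
  exact key

/-- Backward partial-sum difference bound. -/
lemma abs_Sbwd_sub_le {d : ℕ} (hd : 1 ≤ d) {u v : ℤ → ℝ} {ε : ℝ} (hε : 0 ≤ ε)
    (hwu : ZeroWindow d u) (hwv : ZeroWindow d v)
    (hb : ∀ j, |u j - v j| ≤ ε) (k : ℤ) (l : ℕ) :
    |Sbwd u k l - Sbwd v k l| ≤ d * ε := by
  have hw : ZeroWindow d (fun j => u j - v j) := by
    intro m
    simp only [Finset.sum_sub_distrib, hwu m, hwv m, sub_zero]
  have key := window_abs_sum_le hd hε hw hb l (k - l)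
  have : Sbwd u k l - Sbwd v k l = ∑ i ∈ Finset.range l, (u ((k - l) + i) - v ((k - l) + i)) := by
    simp only [Sbwd, ← Finset.sum_sub_distrib]
    rw [← Finset.sum_range_reflect]
    apply Finset.sum_congr rfl
    intro i hi
    simp only [Finset.mem_range] at hi
    congr 2 <;> omega
  rw [this]
  exact key

lemma rho_pos (s : ℤ → ℝ) (k : ℤ) (m : ℕ) : 0 < rho s k m := by
  apply div_pos
  · apply mul_pos (Real.exp_pos _)
    exact Finset.sum_pos (fun l _ => Real.exp_pos _) ⟨0, Finset.mem_range.mpr (by omega)⟩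
  · exact Finset.sum_pos (fun l _ => Real.exp_pos _) ⟨0, Finset.mem_range.mpr (by omega)⟩

/-- Main ratio bound. -/
lemma rho_div_rho_le {d : ℕ} (hd : 1 ≤ d) {u v : ℤ → ℝ} {ε : ℝ} (hε : 0 ≤ ε)
    (hwu : ZeroWindow d u) (hwv : ZeroWindow d v)
    (hb : ∀ j, |u j - v j| ≤ ε) (k : ℤ) (m : ℕ) :
    rho u k m / rho v k m ≤ Real.exp ((2 * d + 1) * ε) := by
  set Au := ∑ l ∈ Finset.range (m + 1), Real.exp (Sfwd u k l) with hAu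
  set Av := ∑ l ∈ Finset.range (m + 1), Real.exp (Sfwd v k l) with hAv
  set Bu := ∑ l ∈ Finset.range (m + 1), Real.exp (-(Sbwd u k l)) with hBu
  set Bv := ∑ l ∈ Finset.range (m + 1), Real.exp (-(Sbwd v k l)) with hBv
  have hAupos : 0 < Au := Finset.sum_pos (fun l _ => Real.exp_pos _) ⟨0, Finset.mem_range.mpr (by omega)⟩
  have hAvpos : 0 < Av := Finset.sum_pos (fun l _ => Real.exp_pos _) ⟨0, Finset.mem_range.mpr (by omega)⟩
  have hBupos : 0 < Bu := Finset.sum_pos (fun l _ => Real.exp_pos _) ⟨0, Finset.mem_range.mpr (by omega)⟩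
  have hBvpos : 0 < Bv := Finset.sum_pos (fun l _ => Real.exp_pos _) ⟨0, Finset.mem_range.mpr (by omega)⟩
  have hA : Au ≤ Real.exp (d * ε) * Av := by
    rw [Finset.mul_sum]
    apply Finset.sum_le_sum
    intro l _
    rw [← Real.exp_add]
    apply Real.exp_le_exp.mpr
    have := (abs_le.mp (abs_Sfwd_sub_le hd hε hwu hwv hb k l)).2
    linarith
  have hB : Bv ≤ Real.exp (d * ε) * Bu := by
    rw [Finset.mul_sum]
    apply Finset.sum_le_sum
    intro l _
    rw [← Real.exp_add]
    apply Real.exp_le_exp.mpr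
    have := (abs_le.mp (abs_Sbwd_sub_le hd hε hwu hwv hb k l)).2
    linarith
  have hk : Real.exp (u k) ≤ Real.exp ε * Real.exp (v k) := by
    rw [← Real.exp_add]
    apply Real.exp_le_exp.mpr
    have := (abs_le.mp (hb k)).2
    linarith
  have hE : Real.exp ((2 * (d:ℝ) + 1) * ε) = Real.exp ε * Real.exp ((d:ℝ) * ε) * Real.exp ((d:ℝ) * ε) := by
    rw [← Real.exp_add, ← Real.exp_add]
    ring_nf
  have hrv : rho v k m = Real.exp (v k) * Av / Bv := rfl
  have hru : rho u k m = Real.exp (u k) * Au / Bu := rfl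
  rw [div_le_iff₀ (rho_pos v k m), hru, hrv, ← mul_div_assoc, div_le_div_iff₀ hBupos hBvpos]
  calc Real.exp (u k) * Au * Bv
      ≤ (Real.exp ε * Real.exp (v k)) * (Real.exp ((d:ℝ) * ε) * Av) *
        (Real.exp ((d:ℝ) * ε) * Bu) := by
        apply mul_le_mul _ hB hBvpos.le (by positivity)
        exact mul_le_mul hk hA hAupos.le (by positivity)
    _ = Real.exp ((2 * (d:ℝ) + 1) * ε) * (Real.exp (v k) * Av) * Bu := by
        rw [hE]; ring

/-- If `s` and the `sₙ` are uniformly bounded by `C`, all satisfy the zero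
`d`-window condition, and `sup_j |sₙ j − s j| → 0`, then
`sup_{k,m} max( ρ(sₙ;k,m)/ρ(s;k,m), ρ(s;k,m)/ρ(sₙ;k,m) ) → 1` as `n → ∞`. -/
theorem rho_ratio_sup_tendsto_one (d : ℕ) (hd : 1 ≤ d) (C : ℝ) (hC : 0 ≤ C)
    (s : ℤ → ℝ) (sn : ℕ → ℤ → ℝ)
    (hs : ∀ j : ℤ, |s j| ≤ C) (hsn : ∀ (n : ℕ) (j : ℤ), |sn n j| ≤ C)
    (hws : ZeroWindow d s) (hwsn : ∀ n : ℕ, ZeroWindow d (sn n))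
    (hconv : Tendsto (fun n => ⨆ j : ℤ, |sn n j - s j|) atTop (nhds 0)) :
    Tendsto
      (fun n => ⨆ (k : ℤ) (m : ℕ),
        max (rho (sn n) k m / rho s k m) (rho s k m / rho (sn n) k m))
      atTop (nhds 1) := by
  set ε : ℕ → ℝ := fun n => ⨆ j : ℤ, |sn n j - s j| with hε
  have hbdd : ∀ n, BddAbove (Set.range fun j : ℤ => |sn n j - s j|) := by
    intro n
    refine ⟨2 * C, ?_⟩
    rintro x ⟨j, rfl⟩
    calc |sn n j - s j| ≤ |sn n j| + |s j| := abs_sub _ _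
      _ ≤ 2 * C := by linarith [hsn n j, hs j]
  have hle : ∀ n j, |sn n j - s j| ≤ ε n := fun n j => le_ciSup (hbdd n) j
  have hεnn : ∀ n, 0 ≤ ε n := fun n => (abs_nonneg _).trans (hle n 0)
  set F : ℕ → ℤ → ℕ → ℝ := fun n k m =>
    max (rho (sn n) k m / rho s k m) (rho s k m / rho (sn n) k m) with hF
  have hFle : ∀ n k m, F n k m ≤ Real.exp ((2 * (d:ℝ) + 1) * ε n) := by
    intro n k m
    apply max_le
    · exact rho_div_rho_le hd (hεnn n) (hwsn n) hws (hle n) k m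
    · exact rho_div_rho_le hd (hεnn n) hws (hwsn n)
        (fun j => by rw [abs_sub_comm]; exact hle n j) k m
  have hFge : ∀ n k m, (1 : ℝ) ≤ F n k m := by
    intro n k m
    rcases le_or_gt 1 (rho (sn n) k m / rho s k m) with h | h
    · exact le_trans h (le_max_left _ _)
    · refine le_trans ?_ (le_max_right _ _)
      rw [le_div_iff₀ (rho_pos (sn n) k m), one_mul]
      rw [div_lt_one (rho_pos s k m)] at h
      exact h.le
  have hbdd_inner : ∀ n k, BddAbove (Set.range fun m => F n k m) := by
    intro n k
    exact ⟨Real.exp ((2 * (d:ℝ) + 1) * ε n), by rintro x ⟨m, rfl⟩; exact hFle n k m⟩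
  have hbdd_outer : ∀ n, BddAbove (Set.range fun k => ⨆ m, F n k m) := by
    intro n
    refine ⟨Real.exp ((2 * (d:ℝ) + 1) * ε n), ?_⟩
    rintro x ⟨k, rfl⟩
    exact ciSup_le fun m => hFle n k m
  have hup : ∀ n, (⨆ (k : ℤ) (m : ℕ), F n k m) ≤ Real.exp ((2 * (d:ℝ) + 1) * ε n) := by
    intro n
    exact ciSup_le fun k => ciSup_le fun m => hFle n k m
  have hlow : ∀ n, (1 : ℝ) ≤ ⨆ (k : ℤ) (m : ℕ), F n k m := by
    intro n
    calc (1 : ℝ) ≤ F n 0 0 := hFge n 0 0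
      _ ≤ ⨆ m, F n 0 m := le_ciSup (hbdd_inner n 0) 0
      _ ≤ ⨆ (k : ℤ) (m : ℕ), F n k m := le_ciSup (hbdd_outer n) 0
  have h1 : Tendsto (fun n => (2 * (d:ℝ) + 1) * ε n) atTop (nhds 0) := by
    simpa using hconv.const_mul (2 * (d:ℝ) + 1)
  have h2 : Tendsto (fun n => Real.exp ((2 * (d:ℝ) + 1) * ε n)) atTop (nhds 1) := by
    simpa [Function.comp_def] using (Real.continuous_exp.tendsto 0).comp h1
  exact tendsto_of_tendsto_of_tendsto_of_le_of_le tendsto_const_nhds h2 hlow hup
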